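/- For every integer n > 2: n^n * (n+1)^{n-1} > (n-1)^{n-1} * (n+2 - 2/(n(n-1)))^n. Equivalently, (1 + 2/(n^2-2))^n > (n+1)/(n-1). -/

import Mathlib

lemma bin_aux (x : ℝ) (hx : 0 ≤ x) (n : ℕ) :
    1 + n * x + n * ((n:ℝ) - 1) / 2 * x ^ 2 ≤ (1 + x) ^ n := by
  induction n with
  | zero => simp
  | succ k ih =>
      have hk : (0:ℝ) ≤ k := Nat.cast_nonneg k
      have hc : (0:ℝ) ≤ (k:ℝ) * ((k:ℝ) - 1) := by
        rcases Nat.eq_zero_or_pos k with h | h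
        · simp [h]
        · have : (1:ℝ) ≤ k := by exact_mod_cast h
          nlinarith
      have h1 : (0:ℝ) ≤ 1 + x := by linarith
      have h2 := mul_le_mul_of_nonneg_right ih h1
      rw [pow_succ (1 + x) k]
      push_cast
      nlinarith [h2, mul_nonneg hc (mul_nonneg (mul_nonneg hx hx) hx)]

theorem stmt_19 (n : ℕ) (hn : 2 < n) :
    (n : ℝ) ^ n * ((n : ℝ) + 1) ^ (n - 1) >
      ((n : ℝ) - 1) ^ (n - 1) * ((n : ℝ) + 2 - 2 / ((n : ℝ) * ((n : ℝ) - 1))) ^ n ∧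
    (1 + 2 / ((n : ℝ) ^ 2 - 2)) ^ n > ((n : ℝ) + 1) / ((n : ℝ) - 1) := by
  have hm : (3:ℝ) ≤ (n:ℝ) := by exact_mod_cast hn
  set m : ℝ := (n:ℝ) with hmdef
  have hm0 : 0 < m := by linarith
  have hm1 : 0 < m - 1 := by linarith
  have hp1 : 0 < m + 1 := by linarith
  have hd : 0 < m ^ 2 - 2 := by nlinarith
  set x : ℝ := 2 / (m ^ 2 - 2) with hxdef
  have hx : 0 ≤ x := by positivity
  -- part 2
  have key : (m + 1) / (m - 1) < (1 + x) ^ n := by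
    have h1 := bin_aux x hx n
    rw [← hmdef] at h1
    have hR : 1 + m * x + m * (m - 1) / 2 * x ^ 2
        = ((m ^ 2 - 2) ^ 2 + 2 * m * (m ^ 2 - 2) + 2 * m * (m - 1)) / (m ^ 2 - 2) ^ 2 := by
      rw [hxdef]
      field_simp
    have h2 : (m + 1) / (m - 1) < 1 + m * x + m * (m - 1) / 2 * x ^ 2 := by
      rw [hR, div_lt_div_iff₀ hm1 (by positivity)]
      nlinarith [hm, hd]
    linarith
  refine ⟨?_, key⟩
  -- part 1 from part 2
  have hx2 : 1 + x = m ^ 2 / (m ^ 2 - 2) := by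
    rw [hxdef]; field_simp; ring
  have key2 : (m + 1) * (m ^ 2 - 2) ^ n < m ^ (2 * n) * (m - 1) := by
    have h3 : (m + 1) / (m - 1) < m ^ (2 * n) / (m ^ 2 - 2) ^ n := by
      rw [pow_mul]
      calc (m + 1) / (m - 1) < (1 + x) ^ n := key
        _ = (m ^ 2) ^ n / (m ^ 2 - 2) ^ n := by rw [hx2, div_pow]
    rw [div_lt_div_iff₀ hm1 (by positivity)] at h3
    linarith
  obtain ⟨k, rfl⟩ : ∃ k, n = k + 1 := ⟨n - 1, by omega⟩
  have hsub : k + 1 - 1 = k := rfl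
  rw [hsub]
  have hB : m + 2 - 2 / (m * (m - 1)) = (m + 1) * (m ^ 2 - 2) / (m * (m - 1)) := by
    field_simp; ring
  rw [hB, div_pow, gt_iff_lt, ← mul_div_assoc, div_lt_iff₀ (by positivity)]
  have hpos : (0:ℝ) < (m - 1) ^ k * (m + 1) ^ k := by positivity
  have h4 := mul_lt_mul_of_pos_right key2 hpos
  have e1 : ((m + 1) * (m ^ 2 - 2)) ^ (k + 1) = (m + 1) ^ (k + 1) * (m ^ 2 - 2) ^ (k + 1) :=
    mul_pow _ _ _
  have e2 : (m * (m - 1)) ^ (k + 1) = m ^ (k + 1) * (m - 1) ^ (k + 1) := mul_pow _ _ _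
  have e3 : m ^ (2 * (k + 1)) = m ^ (k + 1) * m ^ (k + 1) := by rw [two_mul, pow_add]
  calc (m - 1) ^ k * ((m + 1) * (m ^ 2 - 2)) ^ (k + 1)
      = (m + 1) * (m ^ 2 - 2) ^ (k + 1) * ((m - 1) ^ k * (m + 1) ^ k) := by rw [e1]; ring
    _ < m ^ (2 * (k + 1)) * (m - 1) * ((m - 1) ^ k * (m + 1) ^ k) := h4
    _ = m ^ (k + 1) * (m + 1) ^ k * (m * (m - 1)) ^ (k + 1) := by rw [e2, e3]; ring
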